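/- (Lemma 3.5.) Let q ≥ 1 and let a be a primitive word in M̂(q−1) such that deg_{x_k}(a) ≠ 0 for some 1 ≤ k ≤ d and such that no cyclic permutation of a equals a^T. Let f_1,…,f_s be pairwise distinct monomials f_i = Π_{j=1}^{r_i} σ_{t_{ij}}(ā)^{m_{ij}} in N̂_σ(q−1), where r_i > 0, t_{i1} > ⋯ > t_{i r_i} ≥ 1, and each m_{ij} > 0 is not divisible by p = char F. Then ∂_q(f_1),…,∂_q(f_s) are linearly independent over F in N̂_σ(q). -/

import Mathlib

/-! Statement 11: (Lemma 3.5.) Linear independence of derivatives of distinct monomials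
in the powers of the sigmas of a primitive word `a` with `a ≁_c a^T`. -/

open scoped BigOperators
open Matrix

/-- Base names of letters: `Sum.inl k` is `x_k`, `Sum.inr (k, s)` is `y_{ks}`. -/
abbrev HBase (d : ℕ) := Fin d ⊕ (Fin d × ℕ+)

/-- Letters of `M̂`: a base name together with a flag marking the transpose. -/
abbrev HLetter (d : ℕ) := HBase d × Bool

/-- The involution on letters: `z ↦ z^T`, `z^T ↦ z`. -/
def hTau {d : ℕ} (l : HLetter d) : HLetter d := (l.1, !l.2)

/-- The level of a letter: `0` for `x_k`, `x_k^T`, and `s` for `y_{ks}`, `y_{ks}^T`.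
A word lies in `M̂(q)` iff all its letters have level `≤ q`. -/
def letterLevel {d : ℕ} (l : HLetter d) : ℕ :=
  match l.1 with
  | Sum.inl _ => 0
  | Sum.inr (_, s) => s

/-- The transpose of a word: reverse it and apply the involution to each letter. -/
def wordT {A : Type*} (τ : A → A) (w : List A) : List A := (w.reverse).map τ

/-- The `m`-th power `e^m` of a word `e` (concatenation of `m` copies). -/
def wpow {A : Type*} (e : List A) (m : ℕ) : List A := (List.replicate m e).flatten

/-- A word is primitive if it is nonempty and is not a power `e^m` with `m ≥ 2`. -/
def WPrimitive {A : Type*} (w : List A) : Prop :=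
  w ≠ [] ∧ ∀ (e : List A) (m : ℕ), 2 ≤ m → w ≠ wpow e m

/-- `a ∼ b`: `b` is a cyclic permutation of `a` or of `a^T`. -/
def simRel {A : Type*} (τ : A → A) (a b : List A) : Prop :=
  List.IsRotated a b ∨ List.IsRotated a (wordT τ b)

/-- Primitive words in `M̂`. -/
def PrimWordH (d : ℕ) := {w : List (HLetter d) // WPrimitive w}

/-- `∼`-equivalence classes of primitive words of `M̂`. -/
def WClsH (d : ℕ) := Quot (fun a b : PrimWordH d => simRel hTau a.1 b.1)

/-- The polynomial algebra `N̂_σ` on indeterminates `σ_t(ā)`, `t ≥ 1`,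
`ā` a `∼`-class of primitive words of `M̂`. -/
abbrev NsigmaH (F : Type*) [CommSemiring F] (d : ℕ) := MvPolynomial (ℕ+ × WClsH d) F

/-- `tr(w) = σ_1(w̄)` for a primitive word `w` (and junk value `0` otherwise; all words
to which `tr` is applied below are primitive). -/
noncomputable def trW (F : Type*) [CommSemiring F] {d : ℕ} (w : List (HLetter d)) :
    NsigmaH F d := by
  classical exact
    if h : WPrimitive w then MvPolynomial.X (1, Quot.mk _ (⟨w, h⟩ : PrimWordH d)) else 0

/-- `σ_t(ā)` as an element of `N̂_σ`, with the convention `σ_0 = 1`. -/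
noncomputable def sigVar (F : Type*) [CommSemiring F] {d : ℕ} (t : ℕ) (c : WClsH d) :
    NsigmaH F d :=
  if h : 0 < t then MvPolynomial.X ((⟨t, h⟩ : ℕ+), c) else 1

/-- The list of words occurring in `∂_q(a) = Σ_j a_1 ⋯ ∂_q(a_j) ⋯ a_r` (a summand for
each position `j` holding a letter `x_k` or `x_k^T`, which is replaced by `y_{kq}` or
`y_{kq}^T`; positions holding `y`-letters contribute `0` and are omitted). -/
def derivWords {d : ℕ} (q : ℕ+) (a : List (HLetter d)) : List (List (HLetter d)) :=
  (List.range a.length).filterMap fun j =>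
    match a[j]? with
    | some (Sum.inl k, b) => some (a.set j (Sum.inr (k, q), b))
    | _ => none

/-- The value of the symbolic derivation `∂_q` on the indeterminate `σ_t(ā)`:
`∂_q(σ_t(a)) = Σ_{i=0}^{t-1} (-1)^i tr(a^i ∂_q(a)) σ_{t-i-1}(a)`. -/
noncomputable def dVal (F : Type*) [CommRing F] {d : ℕ} (q : ℕ+)
    (v : ℕ+ × WClsH d) : NsigmaH F d :=
  ∑ i ∈ Finset.range (v.1 : ℕ),
    (-1 : NsigmaH F d) ^ i *
      ((derivWords q (Quot.out v.2).1).map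
          (fun w => trW F (wpow (Quot.out v.2).1 i ++ w))).sum *
        sigVar F ((v.1 : ℕ) - i - 1) v.2

/-- The symbolic derivation `∂_q : N̂_σ → N̂_σ` (defined on indeterminates by `dVal` and
extended by linearity and the Leibniz rule). -/
noncomputable def DS (F : Type*) [CommRing F] (d : ℕ) (q : ℕ+) :
    Derivation F (NsigmaH F d) (NsigmaH F d) :=
  MvPolynomial.mkDerivation F (dVal F q)

/-- Variables of the polynomial ring `R̂_n`: `Sum.inl (i,j,k)` is `x_{ij}(k)` and
`Sum.inr (i,j,k,s)` is `y_{ij}(k,s)`. -/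
abbrev VarHat (n d : ℕ) := (Fin n × Fin n × Fin d) ⊕ (Fin n × Fin n × Fin d × ℕ+)

/-- The polynomial ring `R̂_n = F[x_{ij}(k), y_{ij}(k,s)]`. -/
abbrev Rhat (F : Type*) [CommSemiring F] (n d : ℕ) := MvPolynomial (VarHat n d) F

/-- The derivation `∂_q(f) = Σ_k Σ_{i,j} (∂f/∂x_{ij}(k))·y_{ij}(k,q)` on `R̂_n`. -/
noncomputable def Dq (F : Type*) [Field F] (n d : ℕ) (q : ℕ+) (f : Rhat F n d) :
    Rhat F n d :=
  ∑ k : Fin d, ∑ i : Fin n, ∑ j : Fin n,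
    MvPolynomial.pderiv (Sum.inl (i, j, k)) f * MvPolynomial.X (Sum.inr (i, j, k, q))

/-- The matrix of a letter: generic matrices `X_k`, `Y_{ks}` and their transposes. -/
noncomputable def hLetterMat (F : Type*) [Field F] (n d : ℕ) (l : HLetter d) :
    Matrix (Fin n) (Fin n) (Rhat F n d) :=
  match l with
  | (Sum.inl k, false) => Matrix.of fun i j => MvPolynomial.X (Sum.inl (i, j, k))
  | (Sum.inl k, true) => (Matrix.of fun i j =>
      (MvPolynomial.X (Sum.inl (i, j, k)) : Rhat F n d))ᵀ
  | (Sum.inr (k, s), false) => Matrix.of fun i j => MvPolynomial.X (Sum.inr (i, j, k, s))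
  | (Sum.inr (k, s), true) => (Matrix.of fun i j =>
      (MvPolynomial.X (Sum.inr (i, j, k, s)) : Rhat F n d))ᵀ

/-- The matrix `X_a` of a word `a = a_1 ⋯ a_r` of `M̂`. -/
noncomputable def hWordMat (F : Type*) [Field F] (n d : ℕ) (w : List (HLetter d)) :
    Matrix (Fin n) (Fin n) (Rhat F n d) :=
  (w.map (hLetterMat F n d)).prod

/-- `σ_t(A)`: the coefficient of `λ^{n-t}` in `det(A + λE)`. -/
noncomputable def msigma {R : Type*} [CommRing R] {ι : Type*} [Fintype ι] [DecidableEq ι]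
    (t : ℕ) (A : Matrix ι ι R) : R :=
  ((A.map Polynomial.C + (Polynomial.X : Polynomial R) • 1).det).coeff (Fintype.card ι - t)

/-- The evaluation homomorphism `Ψ̂_n : N̂_σ → R̂_n`, sending `σ_t(ā)` to `σ_t(X_a)` if
`t ≤ n` and to `0` otherwise (it does not depend on the representative of `ā`). -/
noncomputable def PsiHat (F : Type*) [Field F] (n d : ℕ) :
    NsigmaH F d →ₐ[F] Rhat F n d :=
  MvPolynomial.aeval fun v : ℕ+ × WClsH d =>
    if (v.1 : ℕ) ≤ n then msigma v.1 (hWordMat F n d (Quot.out v.2).1) else 0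

namespace L35

section Lists
variable {α : Type*}

lemma wpow_zero (e : List α) : wpow e 0 = [] := rfl

lemma wpow_succ (e : List α) (m : ℕ) : wpow e (m+1) = e ++ wpow e m := by
  simp [wpow, List.replicate_succ]

lemma length_wpow (e : List α) (m : ℕ) : (wpow e m).length = m * e.length := by
  induction m with
  | zero => simp [wpow_zero]
  | succ k ih => simp [wpow_succ, ih]; ring

lemma countP_wpow (p : α → Bool) (e : List α) (m : ℕ) :
    (wpow e m).countP p = m * e.countP p := by
  induction m with
  | zero => simp [wpow_zero]
  | succ k ih => simp [wpow_succ, List.countP_append, ih]; ring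

lemma getElem_wpow (e : List α) (m i : ℕ) (h : i < (wpow e m).length) :
    (wpow e m)[i] = e[i % e.length]'(Nat.mod_lt _ (by
      rcases Nat.eq_zero_or_pos e.length with h0 | h0
      · exfalso; rw [length_wpow, h0, Nat.mul_zero] at h; omega
      · exact h0)) := by
  induction m generalizing i with
  | zero => simp [wpow_zero] at h
  | succ k ih =>
    have hlen : (wpow e (k+1)).length = e.length + k * e.length := by
      rw [length_wpow]; ring
    rw [List.getElem_of_eq (wpow_succ e k) h]
    rw [wpow_succ] at h
    rw [List.getElem_append]
    split
    · next h' => congr 1; exact (Nat.mod_eq_of_lt h').symm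
    · next h' =>
      push_neg at h'
      have h2 : i - e.length < (wpow e k).length := by
        simp only [List.length_append] at h; omega
      rw [ih _ h2]
      congr 1
      have : i = (i - e.length) + e.length := by omega
      rw [this, Nat.add_mod_right, Nat.add_sub_cancel]

/-- rotation by multiples -/
lemma rotate_mul_self (l : List α) (t : ℕ) (h : l.rotate t = l) (x : ℕ) :
    l.rotate (x * t) = l := by
  induction x with
  | zero => simp
  | succ k ih =>
    have : (k+1) * t = k * t + t := by ring
    rw [this, ← List.rotate_rotate, ih, h]

lemma rotate_gcd_self (l : List α) (t : ℕ) (h : l.rotate t = l) :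
    l.rotate (Nat.gcd t l.length) = l := by
  rcases Nat.eq_zero_or_pos l.length with h0 | h0
  · have : l = [] := List.length_eq_zero_iff.mp h0
    subst this; simp
  set n := l.length with hn
  haveI : NeZero n := ⟨by omega⟩
  obtain ⟨x, hx⟩ := ZMod.natCast_zmod_surjective (n := n) ((Nat.gcdA t n : ℤ) : ZMod n)
  have hcong : ((x * t : ℕ) : ZMod n) = ((Nat.gcd t n : ℕ) : ZMod n) := by
    have hb := Nat.gcd_eq_gcd_ab t n
    have : ((Nat.gcd t n : ℤ) : ZMod n) = ((t : ℤ) : ZMod n) * ((Nat.gcdA t n : ℤ) : ZMod n) := by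
      rw [hb]; push_cast; simp [ZMod.natCast_self]
    push_cast at this ⊢
    rw [this, hx]; ring
  have hmod : (x * t) % n = (Nat.gcd t n) % n := (ZMod.natCast_eq_natCast_iff _ _ _).mp hcong
  calc l.rotate (Nat.gcd t n)
      = l.rotate ((Nat.gcd t n) % n) := (List.rotate_mod l _).symm
    _ = l.rotate ((x * t) % n) := by rw [hmod]
    _ = l.rotate (x * t) := List.rotate_mod l _
    _ = l := rotate_mul_self l t h x

lemma eq_wpow_of_rotate (l : List α) (g : ℕ) (hg : 0 < g) (hdvd : g ∣ l.length)
    (h : l.rotate g = l) : l = wpow (l.take g) (l.length / g) := by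
  rcases Nat.eq_zero_or_pos l.length with h0 | h0
  · have : l = [] := List.length_eq_zero_iff.mp h0
    subst this; simp [wpow]
  set n := l.length with hn
  have hgn : g ≤ n := Nat.le_of_dvd h0 hdvd
  have htl : (l.take g).length = g := by simp [hn]; omega
  have hper : ∀ i, (hi : i < n) → l[i] = l[i % g]'(by have := Nat.mod_lt i hg; omega) := by
    intro i
    induction i using Nat.strong_induction_on with
    | _ i ih =>
      intro hi
      rcases Nat.lt_or_ge i g with hlt | hge
      · congr 1; exact (Nat.mod_eq_of_lt hlt).symm
      · have h1 : i - g < i := by omega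
        have h2 : i - g < n := by omega
        have hw : i - g < (l.rotate g).length := by
          rw [List.length_rotate]; omega
        have key : l[i - g] = l[i] := by
          rw [← List.getElem_of_eq h hw, List.getElem_rotate]
          congr 1
          have : i - g + g = i := by omega
          rw [this, Nat.mod_eq_of_lt hi]
        have := ih (i - g) h1 h2
        rw [← key, this]
        congr 1
        conv_rhs => rw [show i = (i - g) + g by omega, Nat.add_mod_right]
  apply List.ext_getElem
  · rw [length_wpow, htl, Nat.div_mul_cancel hdvd]
  · intro i h1 h2
    rw [getElem_wpow]
    simp only [htl]
    rw [List.getElem_take]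
    exact hper i h1

lemma rotate_eq_self_primitive {l : List α} (hp : WPrimitive l) (t : ℕ)
    (h : l.rotate t = l) : t % l.length = 0 := by
  have hne : l ≠ [] := hp.1
  have h0 : 0 < l.length := List.length_pos_iff.mpr hne
  by_contra hc
  set n := l.length with hn
  set t' := t % n with ht'
  have ht'0 : 0 < t' := Nat.pos_of_ne_zero hc
  have ht'n : t' < n := Nat.mod_lt _ h0
  have hrot' : l.rotate t' = l := by rw [ht', List.rotate_mod, h]
  set g := Nat.gcd t' n with hg
  have hgpos : 0 < g := Nat.gcd_pos_of_pos_left _ ht'0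
  have hgdvd : g ∣ n := Nat.gcd_dvd_right _ _
  have hgt : g ≤ t' := Nat.le_of_dvd ht'0 (Nat.gcd_dvd_left _ _)
  have hrotg : l.rotate g = l := rotate_gcd_self l t' hrot'
  have hpow := eq_wpow_of_rotate l g hgpos hgdvd hrotg
  have hge2 : 2 ≤ n / g := by
    have hq := Nat.div_mul_cancel hgdvd
    rcases Nat.lt_or_ge (n / g) 2 with hlt | hge
    · interval_cases h : (n / g) <;> simp at hq <;> omega
    · exact hge
  exact hp.2 _ _ hge2 hpow

lemma mod_add_inj {N r i i' : ℕ} (hi : i < N) (hi' : i' < N)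
    (h : (i + r) % N = (i' + r) % N) : i = i' := by
  have h2 : i ≡ i' [MOD N] := Nat.ModEq.add_right_cancel' r h
  have h3 : i % N = i' % N := h2
  rwa [Nat.mod_eq_of_lt hi, Nat.mod_eq_of_lt hi'] at h3

lemma list_sum_ite_eq {β M : Type*} [AddCommMonoid M] [DecidableEq β]
    (l : List β) (b : β) (r : M) :
    (l.map (fun x => if x = b then r else 0)).sum = l.count b • r := by
  induction l with
  | nil => simp
  | cons x xs ih =>
    simp only [List.map_cons, List.sum_cons, ih, List.count_cons]
    by_cases hx : x = b
    · subst hx; simp [add_smul, add_comm]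
    · have hbe : (x == b) = false := beq_false_of_ne hx
      simp [hx, hbe]

end Lists
end L35
namespace L35

variable {d : ℕ}

lemma hTau_hTau (l : HLetter d) : hTau (hTau l) = l := by
  simp [hTau]

lemma letterLevel_hTau (l : HLetter d) : letterLevel (hTau l) = letterLevel l := rfl

lemma length_wordT (w : List (HLetter d)) : (wordT hTau w).length = w.length := by
  simp [wordT]

lemma wordT_wordT (w : List (HLetter d)) : wordT hTau (wordT hTau w) = w := by
  simp only [wordT, List.map_reverse, List.reverse_reverse, List.map_map]
  rw [show hTau (d := d) ∘ hTau = id from funext hTau_hTau, List.map_id]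

lemma isRotated_wordT {u v : List (HLetter d)} (h : u ~r v) :
    wordT hTau u ~r wordT hTau v :=
  (h.reverse).map hTau

lemma mem_wordT {x : HLetter d} {w : List (HLetter d)} :
    x ∈ wordT hTau w ↔ hTau x ∈ w := by
  simp only [wordT, List.mem_map, List.mem_reverse]
  constructor
  · rintro ⟨y, hy, rfl⟩; rwa [hTau_hTau]
  · intro h; exact ⟨hTau x, h, hTau_hTau x⟩

lemma simRel_refl (u : List (HLetter d)) : simRel hTau u u := Or.inl (List.IsRotated.refl u)

lemma simRel_symm {u v : List (HLetter d)} (h : simRel hTau u v) : simRel hTau v u := by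
  rcases h with h | h
  · exact Or.inl h.symm
  · right
    have := (isRotated_wordT h).symm
    rwa [wordT_wordT] at this

lemma simRel_trans {u v x : List (HLetter d)} (h1 : simRel hTau u v)
    (h2 : simRel hTau v x) : simRel hTau u x := by
  rcases h1 with h1 | h1 <;> rcases h2 with h2 | h2
  · exact Or.inl (h1.trans h2)
  · exact Or.inr (h1.trans h2)
  · right
    exact h1.trans (isRotated_wordT h2)
  · left
    have := isRotated_wordT h2
    rw [wordT_wordT] at this
    exact h1.trans this

lemma primRel_equiv : Equivalence (fun a b : PrimWordH d => simRel hTau a.1 b.1) :=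
  ⟨fun a => simRel_refl a.1, fun h => simRel_symm h, fun h1 h2 => simRel_trans h1 h2⟩

lemma simRel_of_cls_eq {p p' : PrimWordH d}
    (h : (Quot.mk (fun a b : PrimWordH d => simRel hTau a.1 b.1) p) = Quot.mk _ p') :
    simRel hTau p.1 p'.1 :=
  (primRel_equiv.eqvGen_iff).mp (Quot.eq.mp h)

/-- transfer of `¬ IsRotated · (wordT hTau ·)` along `simRel`. -/
lemma isRotated_wordT_self_of_simRel {x y : List (HLetter d)}
    (h : simRel hTau x y) (hy : y ~r wordT hTau y) : x ~r wordT hTau x := by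
  rcases h with h | h
  · exact (h.trans hy).trans (isRotated_wordT h.symm)
  · have h2 : wordT hTau x ~r y := by
      have := isRotated_wordT h
      rwa [wordT_wordT] at this
    exact h.trans (h2.trans hy).symm

/-- the length of a class. -/
def clsLen (c : WClsH d) : ℕ :=
  Quot.lift (fun p : PrimWordH d => p.1.length)
    (by
      rintro p p' (h | h)
      · exact h.perm.length_eq
      · exact (h.perm.length_eq).trans (length_wordT _)) c

@[simp] lemma clsLen_mk (p : PrimWordH d) : clsLen (Quot.mk _ p) = p.1.length := rfl

/-- number of letters of level `≥ q` in a word. -/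
def countQ (q : ℕ+) (w : List (HLetter d)) : ℕ :=
  w.countP (fun l => decide ((q : ℕ) ≤ letterLevel l))

lemma countQ_wordT (q : ℕ+) (w : List (HLetter d)) : countQ q (wordT hTau w) = countQ q w := by
  unfold countQ wordT
  rw [List.countP_map]
  have : ((fun l => decide ((q:ℕ) ≤ letterLevel l)) ∘ hTau) =
      (fun l : HLetter d => decide ((q:ℕ) ≤ letterLevel l)) := by
    funext l; simp [letterLevel_hTau]; rfl
  rw [this]
  exact (List.reverse_perm w).countP_eq _

/-- number of letters of level `≥ q` in a class. -/
def clsCountQ (q : ℕ+) (c : WClsH d) : ℕ :=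
  Quot.lift (fun p : PrimWordH d => countQ q p.1)
    (by
      rintro p p' (h | h)
      · exact h.perm.countP_eq _
      · exact (h.perm.countP_eq _).trans (countQ_wordT q _)) c

@[simp] lemma clsCountQ_mk (q : ℕ+) (p : PrimWordH d) :
    clsCountQ q (Quot.mk _ p) = countQ q p.1 := rfl

lemma countQ_wpow (q : ℕ+) (e : List (HLetter d)) (m : ℕ) :
    countQ q (wpow e m) = m * countQ q e := countP_wpow _ e m

lemma countQ_append (q : ℕ+) (u v : List (HLetter d)) :
    countQ q (u ++ v) = countQ q u + countQ q v := List.countP_append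

lemma countQ_eq_zero {q : ℕ+} {w : List (HLetter d)}
    (h : ∀ l ∈ w, letterLevel l < (q : ℕ)) : countQ q w = 0 := by
  rw [countQ, List.countP_eq_zero]
  intro l hl
  simpa using Nat.not_le.mpr (h l hl)

lemma wprimitive_of_countQ_one {q : ℕ+} {w : List (HLetter d)}
    (h : countQ q w = 1) : WPrimitive w := by
  constructor
  · rintro rfl; simp [countQ] at h
  · rintro e mm hmm rfl
    rw [countQ_wpow] at h
    have : mm ∣ 1 := ⟨_, h.symm⟩
    have := Nat.le_of_dvd one_pos this
    omega

end L35
namespace L35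

variable {d : ℕ}

lemma getElem_idx_congr {α : Type*} (l : List α) {i j : ℕ} (h : i = j) (hi : i < l.length) :
    l[i] = l[j]'(h ▸ hi) := by subst h; rfl

lemma mem_derivWords {q : ℕ+} {A w : List (HLetter d)} :
    w ∈ derivWords q A ↔ ∃ (j : ℕ) (hj : j < A.length) (k : Fin d) (b : Bool),
      A[j] = (Sum.inl k, b) ∧ w = A.set j (Sum.inr (k, q), b) := by
  unfold derivWords
  rw [List.mem_filterMap]
  constructor
  · rintro ⟨j, hj, hfj⟩
    rw [List.mem_range] at hj
    refine ⟨j, hj, ?_⟩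
    rw [List.getElem?_eq_getElem hj] at hfj
    rcases hAj : A[j] with ⟨bs, bb⟩
    rw [hAj] at hfj
    cases bs with
    | inl k =>
      simp only [Option.some.injEq] at hfj
      exact ⟨k, bb, rfl, hfj.symm⟩
    | inr p => simp at hfj
  · rintro ⟨j, hj, k, b, hAj, rfl⟩
    refine ⟨j, List.mem_range.mpr hj, ?_⟩
    rw [List.getElem?_eq_getElem hj, hAj]

lemma countQ_set_one {q : ℕ+} {A : List (HLetter d)}
    (hlev : ∀ l ∈ A, letterLevel l < (q : ℕ))
    {j : ℕ} (hj : j < A.length) {y : HLetter d} (hy : (q : ℕ) ≤ letterLevel y) :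
    countQ q (A.set j y) = 1 := by
  rw [List.set_eq_take_append_cons_drop, if_pos hj, countQ_append]
  have h1 : countQ q (A.take j) = 0 :=
    countQ_eq_zero (fun l hl => hlev l (List.mem_of_mem_take hl))
  have h2 : countQ q (A.drop (j+1)) = 0 :=
    countQ_eq_zero (fun l hl => hlev l (List.mem_of_mem_drop hl))
  have h3 : countQ q (y :: A.drop (j+1)) = 1 + countQ q (A.drop (j+1)) := by
    unfold countQ
    rw [List.countP_cons]
    simp [hy, add_comm]
  rw [h1, h3, h2]

lemma countQ_derivWord {q : ℕ+} {A : List (HLetter d)}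
    (hlev : ∀ l ∈ A, letterLevel l < (q : ℕ))
    {w : List (HLetter d)} (hw : w ∈ derivWords q A) : countQ q w = 1 := by
  obtain ⟨j, hj, k, b, hAj, rfl⟩ := mem_derivWords.mp hw
  exact countQ_set_one hlev hj (le_refl _)

lemma countQ_pow_append {q : ℕ+} {A : List (HLetter d)}
    (hlev : ∀ l ∈ A, letterLevel l < (q : ℕ))
    {w : List (HLetter d)} (hw : w ∈ derivWords q A) (ℓ : ℕ) :
    countQ q (wpow A ℓ ++ w) = 1 := by
  rw [countQ_append, countQ_wpow, countQ_eq_zero hlev, countQ_derivWord hlev hw]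
  ring

lemma prim_pow_append {q : ℕ+} {A : List (HLetter d)}
    (hlev : ∀ l ∈ A, letterLevel l < (q : ℕ))
    {w : List (HLetter d)} (hw : w ∈ derivWords q A) (ℓ : ℕ) :
    WPrimitive (wpow A ℓ ++ w) :=
  wprimitive_of_countQ_one (countQ_pow_append hlev hw ℓ)

lemma length_derivWord {q : ℕ+} {A w : List (HLetter d)} (hw : w ∈ derivWords q A) :
    w.length = A.length := by
  obtain ⟨j, hj, k, b, hAj, rfl⟩ := mem_derivWords.mp hw
  simp

lemma getElem_wpow_append_set {α : Type*} (A : List α) (ℓ j : ℕ) (hj : j < A.length)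
    (y : α) (i : ℕ) (h : i < (wpow A ℓ ++ A.set j y).length) :
    (wpow A ℓ ++ A.set j y)[i] =
      if i = ℓ * A.length + j then y
      else A[i % A.length]'(Nat.mod_lt _ (by omega)) := by
  have hn0 : 0 < A.length := by omega
  have htot : (wpow A ℓ ++ A.set j y).length = ℓ * A.length + A.length := by
    simp [length_wpow]
  rw [List.getElem_append]
  split
  · next h' =>
    have h'' : i < ℓ * A.length := by rwa [length_wpow] at h'
    rw [getElem_wpow]
    rw [if_neg (by omega)]
  · next h' =>
    rw [length_wpow] at h'
    push_neg at h'
    have hi2 : i - ℓ * A.length < A.length := by omega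
    rw [List.getElem_set]
    have hidx : (wpow A ℓ).length = ℓ * A.length := length_wpow A ℓ
    by_cases hij : i = ℓ * A.length + j
    · rw [if_pos (by omega : j = i - (wpow A ℓ).length), if_pos hij]
    · rw [if_neg (by rw [hidx]; omega : ¬ j = i - (wpow A ℓ).length), if_neg hij]
      rw [getElem_idx_congr A (show i - (wpow A ℓ).length = i % A.length by
        rw [hidx]
        conv_rhs => rw [show i = ℓ * A.length + (i - ℓ * A.length) by omega]
        rw [Nat.add_comm, Nat.add_mul_mod_self_right, Nat.mod_eq_of_lt hi2]
        )]

end L35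
namespace L35

variable {d : ℕ}

lemma mod_helper (ℓ n x : ℕ) : (ℓ * n + x) % n = x % n := by
  rw [Nat.add_comm, Nat.add_mul_mod_self_right]

lemma deriv_words_inj {q : ℕ+} {A : List (HLetter d)} (hA : WPrimitive A)
    (hlevA : ∀ l ∈ A, letterLevel l < (q : ℕ))
    (hncA : ¬ A ~r wordT hTau A)
    {w w' : List (HLetter d)} (hw : w ∈ derivWords q A) (hw' : w' ∈ derivWords q A)
    (ℓ : ℕ) (hsim : simRel hTau (wpow A ℓ ++ w) (wpow A ℓ ++ w')) : w = w' := by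
  obtain ⟨j, hj, k, b, hAj, rfl⟩ := mem_derivWords.mp hw
  obtain ⟨j', hj', k', b', hAj', rfl⟩ := mem_derivWords.mp hw'
  clear hw hw'
  set n := A.length with hn
  have hn0 : 0 < n := by omega
  set y : HLetter d := (Sum.inr (k, q), b) with hy_def
  set y' : HLetter d := (Sum.inr (k', q), b') with hy'_def
  set N := ℓ * n + n with hN
  have hNn : n ∣ N := ⟨ℓ + 1, by rw [hN]; ring⟩
  have hN0 : 0 < N := by omega
  have hPN : ℓ * n + j < N := by omega
  have hP'N : ℓ * n + j' < N := by omega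
  have hulen : (wpow A ℓ ++ A.set j y).length = N := by
    simp [length_wpow, hN, ← hn]
  have hu'len : (wpow A ℓ ++ A.set j' y').length = N := by
    simp [length_wpow, hN, ← hn]
  have hqy : letterLevel y = (q : ℕ) := rfl
  have hqy' : letterLevel y' = (q : ℕ) := rfl
  have hu : ∀ (i : ℕ) (hi : i < N),
      (wpow A ℓ ++ A.set j y)[i]'(by rw [hulen]; exact hi) =
        if i = ℓ * n + j then y else A[i % n]'(Nat.mod_lt _ hn0) := by
    intro i hi
    exact getElem_wpow_append_set A ℓ j hj y i (by rw [hulen]; exact hi)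
  have hu' : ∀ (i : ℕ) (hi : i < N),
      (wpow A ℓ ++ A.set j' y')[i]'(by rw [hu'len]; exact hi) =
        if i = ℓ * n + j' then y' else A[i % n]'(Nat.mod_lt _ hn0) := by
    intro i hi
    exact getElem_wpow_append_set A ℓ j' hj' y' i (by rw [hu'len]; exact hi)
  rcases hsim with ⟨r', hr'⟩ | ⟨r', hr'⟩
  · -- rotation case
    set r := r' % N with hr_def
    have hrot : (wpow A ℓ ++ A.set j y).rotate r = wpow A ℓ ++ A.set j' y' := by
      rw [hr_def, ← hulen, List.rotate_mod]
      exact hr'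
    have hpt : ∀ (i : ℕ) (hi : i < N),
        (if i = ℓ * n + j' then y' else A[i % n]'(Nat.mod_lt _ hn0)) =
        (if (i + r) % N = ℓ * n + j then y
          else A[((i + r) % N) % n]'(Nat.mod_lt _ hn0)) := by
      intro i hi
      have hb1 : (i + r) % N < N := Nat.mod_lt _ hN0
      have e0 : ((wpow A ℓ ++ A.set j y).rotate r)[i]'(by
            rw [List.length_rotate, hulen]; exact hi) =
          (wpow A ℓ ++ A.set j y)[(i + r) % N]'(by rw [hulen]; exact hb1) := by
        rw [List.getElem_rotate]
        exact getElem_idx_congr _ (by rw [hulen]) _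
      have e1 := List.getElem_of_eq hrot (show i < ((wpow A ℓ ++ A.set j y).rotate r).length
        by rw [List.length_rotate, hulen]; exact hi)
      rw [← hu' i hi, ← hu ((i + r) % N) hb1, ← e0, e1]
    have hyy : ((ℓ * n + j') + r) % N = ℓ * n + j ∧ y' = y := by
      have h1 := hpt (ℓ * n + j') hP'N
      rw [if_pos rfl] at h1
      by_cases hc : ((ℓ * n + j') + r) % N = ℓ * n + j
      · rw [if_pos hc] at h1; exact ⟨hc, h1⟩
      · exfalso
        rw [if_neg hc] at h1
        have hlev2 := hlevA _ (List.getElem_mem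
          (Nat.mod_lt ((ℓ * n + j' + r) % N) hn0))
        rw [← h1] at hlev2
        rw [hqy'] at hlev2
        omega
    obtain ⟨hyP, hyy'⟩ := hyy
    have hkb : (⟨Sum.inr (k', q), b'⟩ : HLetter d) = (Sum.inr (k, q), b) := hyy'
    have hkk : k' = k ∧ b' = b := by
      simpa [Prod.ext_iff] using hkb
    have hAjj' : A[j']'hj' = A[j]'hj := by
      rw [hAj', hAj, hkk.1, hkk.2]
    have hrotA : ∀ (s : ℕ) (hs : s < n),
        A[(s + r) % n]'(Nat.mod_lt _ hn0) = A[s]'(by omega) := by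
      intro s hs
      by_cases hsj : s = j'
      · have e1 : (s + r) % n = j := by
          have e2 : ((ℓ * n + j') + r) % N % n = (j' + r) % n := by
            rw [Nat.mod_mod_of_dvd _ hNn,
              show ℓ * n + j' + r = ℓ * n + (j' + r) by ring, mod_helper]
          rw [hyP, mod_helper, Nat.mod_eq_of_lt hj] at e2
          rw [hsj]
          exact e2.symm
        calc A[(s + r) % n]'(Nat.mod_lt _ hn0) = A[j]'hj := getElem_idx_congr A e1 _
          _ = A[j']'hj' := hAjj'.symm
          _ = A[s]'(by omega) := getElem_idx_congr A hsj.symm _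
      · have hsP' : s ≠ ℓ * n + j' := by
          intro hc
          rcases Nat.eq_zero_or_pos ℓ with h0 | h0
          · apply hsj; rw [h0] at hc; simpa using hc
          · have : n ≤ ℓ * n := Nat.le_mul_of_pos_left n h0
            omega
        have h1 := hpt s (by omega)
        rw [if_neg hsP'] at h1
        have hsr : (s + r) % N ≠ ℓ * n + j := by
          intro hc
          exact hsP' (mod_add_inj (by omega) hP'N (hc.trans hyP.symm))
        rw [if_neg hsr] at h1
        have e11 : (s + r) % N % n = (s + r) % n := Nat.mod_mod_of_dvd _ hNn
        calc A[(s + r) % n]'(Nat.mod_lt _ hn0)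
            = A[(s + r) % N % n]'(Nat.mod_lt _ hn0) := (getElem_idx_congr A e11 _).symm
          _ = A[s % n]'(Nat.mod_lt _ hn0) := h1.symm
          _ = A[s]'(by omega) := getElem_idx_congr A (Nat.mod_eq_of_lt hs) _
    have hrotAn : A.rotate (r % n) = A := by
      apply List.ext_getElem
      · simp
      · intro s h1' h2'
        rw [List.getElem_rotate]
        have e13 : (s + r % n) % A.length = (s + r) % n := by
          rw [← hn, Nat.add_mod_mod]
        rw [getElem_idx_congr A e13]
        exact hrotA s (by rw [hn]; exact h2')
    have hr0 : r % n = 0 := by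
      have h2 := rotate_eq_self_primitive hA (r % n) hrotAn
      rwa [← hn, Nat.mod_eq_of_lt (Nat.mod_lt _ hn0)] at h2
    have hjj' : j = j' := by
      have e5 : ((ℓ * n + j') + r) % N % n = (j' + r) % n := by
        rw [Nat.mod_mod_of_dvd _ hNn,
          show ℓ * n + j' + r = ℓ * n + (j' + r) by ring, mod_helper]
      rw [hyP, mod_helper, Nat.mod_eq_of_lt hj] at e5
      have e6 : (j' + r) % n = j' := by
        rw [← Nat.add_mod_mod, hr0, Nat.add_zero, Nat.mod_eq_of_lt hj']
      omega
    rw [hjj', hyy']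
  · -- transpose case: impossible
    exfalso
    apply hncA
    set r := r' % N with hr_def
    have hwlen : (wordT hTau (wpow A ℓ ++ A.set j' y')).length = N := by
      rw [length_wordT, hu'len]
    have hrot : (wpow A ℓ ++ A.set j y).rotate r =
        wordT hTau (wpow A ℓ ++ A.set j' y') := by
      rw [hr_def, ← hulen, List.rotate_mod]
      exact hr'
    have hpt : ∀ (i : ℕ) (hi : i < N),
        (if (i + r) % N = ℓ * n + j then y
          else A[((i + r) % N) % n]'(Nat.mod_lt _ hn0)) =
        hTau (if N - 1 - i = ℓ * n + j' then y'
          else A[(N - 1 - i) % n]'(Nat.mod_lt _ hn0)) := by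
      intro i hi
      have hb1 : (i + r) % N < N := Nat.mod_lt _ hN0
      have hb2 : N - 1 - i < N := by omega
      have e0 : ((wpow A ℓ ++ A.set j y).rotate r)[i]'(by
            rw [List.length_rotate, hulen]; exact hi) =
          (wpow A ℓ ++ A.set j y)[(i + r) % N]'(by rw [hulen]; exact hb1) := by
        rw [List.getElem_rotate]
        exact getElem_idx_congr _ (by rw [hulen]) _
      have e1 := List.getElem_of_eq hrot (show i < ((wpow A ℓ ++ A.set j y).rotate r).length
        by rw [List.length_rotate, hulen]; exact hi)
      have e2 : (wordT hTau (wpow A ℓ ++ A.set j' y'))[i]'(by rw [hwlen]; exact hi) =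
          hTau ((wpow A ℓ ++ A.set j' y')[N - 1 - i]'(by rw [hu'len]; exact hb2)) := by
        simp only [wordT]
        rw [List.getElem_map]
        congr 1
        rw [List.getElem_reverse]
        exact getElem_idx_congr _ (by rw [hu'len]) _
      rw [← hu ((i + r) % N) hb1, ← e0, e1, e2, hu' (N - 1 - i) hb2]
    set i₀ := n - 1 - j' with hi₀
    have hi₀N : i₀ < N := by omega
    have hNi₀ : N - 1 - i₀ = ℓ * n + j' := by omega
    have h1 := hpt i₀ hi₀N
    rw [hNi₀, if_pos rfl] at h1
    have hcy : (i₀ + r) % N = ℓ * n + j ∧ y = hTau y' := by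
      by_cases hc : (i₀ + r) % N = ℓ * n + j
      · rw [if_pos hc] at h1; exact ⟨hc, h1⟩
      · exfalso
        rw [if_neg hc] at h1
        have hlev2 := hlevA _ (List.getElem_mem
          (Nat.mod_lt ((i₀ + r) % N) hn0))
        rw [h1] at hlev2
        have : letterLevel (hTau y') = (q : ℕ) := by rw [letterLevel_hTau, hqy']
        omega
    obtain ⟨hc, hyt⟩ := hcy
    have hkk : k = k' ∧ b = !b' := by
      have : (⟨Sum.inr (k, q), b⟩ : HLetter d) = (Sum.inr (k', q), !b') := hyt
      simpa [Prod.ext_iff] using this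
    have hkb : hTau (A[j']'hj') = A[j]'hj := by
      rw [hAj', hAj]
      simp [hTau, hkk.1, hkk.2]
    have hkey : ∀ (s : ℕ) (hs : s < n),
        A[(s + r) % n]'(Nat.mod_lt _ hn0) = hTau (A[n - 1 - s]'(by omega)) := by
      intro s hs
      by_cases hsj : s = i₀
      · have e5 : n - 1 - s = j' := by omega
        have e6 : (s + r) % n = j := by
          have e7 : (i₀ + r) % N % n = (s + r) % n := by
            rw [Nat.mod_mod_of_dvd _ hNn, hsj]
          rw [hc, mod_helper, Nat.mod_eq_of_lt hj] at e7
          exact e7.symm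
        rw [getElem_idx_congr A e6, getElem_idx_congr A e5]
        exact hkb.symm
      · have hiN : s < N := by omega
        have h2 := hpt s hiN
        have e8 : N - 1 - s = ℓ * n + (n - 1 - s) := by omega
        have e9 : N - 1 - s ≠ ℓ * n + j' := by omega
        rw [if_neg e9] at h2
        have e10 : (s + r) % N ≠ ℓ * n + j := by
          intro hcc
          exact hsj (mod_add_inj hiN hi₀N (hcc.trans hc.symm))
        rw [if_neg e10] at h2
        have e11 : (s + r) % N % n = (s + r) % n := Nat.mod_mod_of_dvd _ hNn
        have e12 : (N - 1 - s) % n = n - 1 - s := by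
          rw [e8, mod_helper, Nat.mod_eq_of_lt (by omega)]
        calc A[(s + r) % n]'(Nat.mod_lt _ hn0)
            = A[(s + r) % N % n]'(Nat.mod_lt _ hn0) := (getElem_idx_congr A e11 _).symm
          _ = hTau (A[(N - 1 - s) % n]'(Nat.mod_lt _ hn0)) := h2
          _ = hTau (A[n - 1 - s]'(by omega)) := by rw [getElem_idx_congr A e12]
    refine ⟨r % n, ?_⟩
    apply List.ext_getElem
    · rw [List.length_rotate, length_wordT]
    · intro s h1' h2'
      have hs : s < n := by
        have hh := h1'
        rw [List.length_rotate] at hh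
        rw [hn]; exact hh
      rw [List.getElem_rotate]
      have e13 : (s + r % n) % A.length = (s + r) % n := by
        rw [← hn, Nat.add_mod_mod]
      rw [getElem_idx_congr A e13]
      have e14 : (wordT hTau A)[s]'h2' = hTau (A[n - 1 - s]'(by omega)) := by
        simp only [wordT]
        rw [List.getElem_map]
        congr 1
        rw [List.getElem_reverse]
      rw [e14]
      exact hkey s hs

end L35
namespace L35

variable {d : ℕ}

lemma derivWords_nodup {q : ℕ+} {A : List (HLetter d)}
    (hlev : ∀ l ∈ A, letterLevel l < (q : ℕ)) : (derivWords q A).Nodup := by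
  unfold derivWords
  refine List.Nodup.filterMap ?_ (List.nodup_range)
  intro j j' w hw hw'
  rw [Option.mem_def] at hw hw'
  -- unpack hw
  split at hw
  case _ k b heq =>
    split at hw'
    case _ k' b' heq' =>
      have hj : j < A.length := by
        rcases List.getElem?_eq_some_iff.mp heq with ⟨h, _⟩
        exact h
      have hj' : j' < A.length := by
        rcases List.getElem?_eq_some_iff.mp heq' with ⟨h, _⟩
        exact h
      have hAj : A[j] = (Sum.inl k, b) := by
        rcases List.getElem?_eq_some_iff.mp heq with ⟨h, h2⟩
        exact h2
      have hAj' : A[j'] = (Sum.inl k', b') := by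
        rcases List.getElem?_eq_some_iff.mp heq' with ⟨h, h2⟩
        exact h2
      have hset : A.set j (Sum.inr (k, q), b) = A.set j' (Sum.inr (k', q), b') := by
        rw [Option.some.inj hw, Option.some.inj hw']
      by_contra hne
      have h1 : (A.set j (Sum.inr (k, q), b))[j]'(by simpa using hj) =
          (Sum.inr (k, q), b) := by
        rw [List.getElem_set, if_pos rfl]
      have h2 : (A.set j' (Sum.inr (k', q), b'))[j]'(by simpa using hj) = A[j] := by
        rw [List.getElem_set, if_neg (fun hc => hne hc.symm)]
      have h3 : ((Sum.inr (k, q), b) : HLetter d) = (Sum.inl k, b) := by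
        calc ((Sum.inr (k, q), b) : HLetter d)
            = (A.set j (Sum.inr (k, q), b))[j]'(by simpa using hj) := h1.symm
          _ = (A.set j' (Sum.inr (k', q), b'))[j]'(by simpa using hj) :=
              List.getElem_of_eq hset _
          _ = A[j] := h2
          _ = (Sum.inl k, b) := hAj
      exact absurd (congrArg (fun p : HLetter d => p.1) h3) (by simp)
    case _ h2 => exact absurd hw' (by simp)
  case _ h2 => exact absurd hw (by simp)

lemma derivWords_exists {q : ℕ+} {A : List (HLetter d)}
    (hx : ∃ (k : Fin d) (b : Bool), ((Sum.inl k : HBase d), b) ∈ A) :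
    ∃ w, w ∈ derivWords q A := by
  obtain ⟨k, b, hmem⟩ := hx
  obtain ⟨j, hj, hAj⟩ := List.mem_iff_getElem.mp hmem
  exact ⟨_, mem_derivWords.mpr ⟨j, hj, k, b, hAj, rfl⟩⟩

lemma prod_monomial_one {σ F : Type*} [CommSemiring F] {ι : Type*} (s : Finset ι)
    (g : ι → (σ →₀ ℕ)) :
    (∏ j ∈ s, MvPolynomial.monomial (g j) (1 : F)) =
      MvPolynomial.monomial (∑ j ∈ s, g j) 1 := by
  induction s using Finset.cons_induction with
  | empty => simp [MvPolynomial.monomial_zero']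
  | cons a s ha ih =>
    rw [Finset.prod_cons, Finset.sum_cons, ih, MvPolynomial.monomial_mul, one_mul]

end L35
namespace L35

variable {d : ℕ}

open Classical in
/-- class of `A^ℓ ++ w` (with default for the junk case). -/
noncomputable def clsF (q : ℕ+) (dflt : PrimWordH d) (A : List (HLetter d)) (ℓ : ℕ)
    (w : List (HLetter d)) : WClsH d :=
  Quot.mk _ (if h : WPrimitive (wpow A ℓ ++ w) then (⟨_, h⟩ : PrimWordH d) else dflt)

lemma clsF_mk {q : ℕ+} {dflt : PrimWordH d} {A w : List (HLetter d)} {ℓ : ℕ}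
    (h : WPrimitive (wpow A ℓ ++ w)) :
    clsF q dflt A ℓ w = Quot.mk _ (⟨wpow A ℓ ++ w, h⟩ : PrimWordH d) := by
  unfold clsF
  exact congrArg (Quot.mk _) (dif_pos h)

/-- the exponent of `sigVar`. -/
noncomputable def sgF (c : WClsH d) (u : ℕ) : (ℕ+ × WClsH d) →₀ ℕ :=
  if h : 0 < u then Finsupp.single ((⟨u, h⟩ : ℕ+), c) 1 else 0

lemma sgF_apply_ne {c : WClsH d} (u : ℕ) {v : ℕ+ × WClsH d} (hv : v.2 ≠ c) :
    sgF c u v = 0 := by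
  classical
  unfold sgF
  split
  · rw [Finsupp.single_apply, if_neg (fun hcc => hv (by rw [← hcc]))]
  · rfl

lemma sgF_zero (c : WClsH d) : sgF c 0 = 0 := by simp [sgF]

lemma trW_eq (F : Type*) [CommSemiring F] {w : List (HLetter d)} (h : WPrimitive w) :
    trW F w = MvPolynomial.monomial
      (Finsupp.single ((1 : ℕ+), Quot.mk _ (⟨w, h⟩ : PrimWordH d)) 1) (1 : F) := by
  unfold trW
  rw [dif_pos h, ← pow_one (MvPolynomial.X _), MvPolynomial.X_pow_eq_monomial]
  rfl

lemma sigVar_eq (F : Type*) [CommSemiring F] (u : ℕ) (c : WClsH d) :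
    sigVar F u c = MvPolynomial.monomial (sgF c u) (1 : F) := by
  unfold sigVar sgF
  split
  · rw [← pow_one (MvPolynomial.X _), MvPolynomial.X_pow_eq_monomial]
  · rw [MvPolynomial.monomial_zero']
    simp

lemma dval_form (F : Type*) [CommRing F] (q : ℕ+) (T : ℕ+) (c : WClsH d)
    (dflt : PrimWordH d)
    (hprim : ∀ (ℓ : ℕ) (w : List (HLetter d)), w ∈ derivWords q (Quot.out c).1 →
      WPrimitive (wpow (Quot.out c).1 ℓ ++ w)) :
    dVal F q ((T, c) : ℕ+ × WClsH d) = ∑ ℓ ∈ Finset.range (T : ℕ),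
      ((derivWords q (Quot.out c).1).map (fun w => MvPolynomial.monomial
        (Finsupp.single ((1 : ℕ+), clsF q dflt (Quot.out c).1 ℓ w) 1 +
          sgF c ((T : ℕ) - ℓ - 1)) ((-1 : F) ^ ℓ))).sum := by
  unfold dVal
  refine Finset.sum_congr rfl fun ℓ hℓ => ?_
  have htr : (derivWords q (Quot.out ((T, c) : ℕ+ × WClsH d).2).1).map
      (fun w => trW F (wpow (Quot.out ((T, c) : ℕ+ × WClsH d).2).1 ℓ ++ w)) =
      (derivWords q (Quot.out c).1).map
      (fun w => MvPolynomial.monomial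
        (Finsupp.single ((1 : ℕ+), clsF q dflt (Quot.out c).1 ℓ w) 1) (1 : F)) := by
    refine List.map_congr_left fun w hw => ?_
    rw [trW_eq F (hprim ℓ w hw), clsF_mk (hprim ℓ w hw)]
    rfl
  rw [htr]
  have hsig : sigVar F (((T, c) : ℕ+ × WClsH d).1 - ℓ - 1) ((T, c) : ℕ+ × WClsH d).2 =
      MvPolynomial.monomial (sgF c ((T : ℕ) - ℓ - 1)) (1 : F) := sigVar_eq F _ c
  rw [hsig]
  have hneg : (-1 : NsigmaH F d) ^ ℓ = MvPolynomial.C ((-1 : F) ^ ℓ) := by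
    rw [map_pow, map_neg, _root_.map_one]
  rw [hneg]
  rw [← List.sum_map_mul_left, ← List.sum_map_mul_right]
  refine congrArg List.sum (List.map_congr_left fun w hw => ?_)
  rw [MvPolynomial.C_mul_monomial, MvPolynomial.monomial_mul, mul_one, mul_one]

/-- the exponent vector of the monomial `f i`. -/
noncomputable def vecOf (c : WClsH d) {rr : ℕ} (tt : Fin rr → ℕ+) (mm : Fin rr → ℕ) :
    (ℕ+ × WClsH d) →₀ ℕ :=
  ∑ j, Finsupp.single ((tt j, c) : ℕ+ × WClsH d) (mm j)

lemma vecOf_apply_ne (c : WClsH d) {rr : ℕ} (tt : Fin rr → ℕ+) (mm : Fin rr → ℕ)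
    {v : ℕ+ × WClsH d} (hv : v.2 ≠ c) : vecOf c tt mm v = 0 := by
  classical
  unfold vecOf
  rw [Finsupp.finset_sum_apply]
  refine Finset.sum_eq_zero fun j _ => ?_
  rw [Finsupp.single_apply, if_neg (fun hcc => hv (by rw [← hcc]))]

lemma vecOf_ge (c : WClsH d) {rr : ℕ} (tt : Fin rr → ℕ+) (mm : Fin rr → ℕ) (k : Fin rr) :
    mm k ≤ vecOf c tt mm ((tt k, c) : ℕ+ × WClsH d) := by
  classical
  unfold vecOf
  rw [Finsupp.finset_sum_apply]
  have := Finset.single_le_sum (f := fun j : Fin rr =>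
      (Finsupp.single ((tt j, c) : ℕ+ × WClsH d) (mm j)) ((tt k, c) : ℕ+ × WClsH d))
    (fun j _ => Nat.zero_le _) (Finset.mem_univ k)
  simpa [Finsupp.single_apply] using this

lemma prod_X_pow_eq (F : Type*) [CommSemiring F] (c : WClsH d) {rr : ℕ}
    (tt : Fin rr → ℕ+) (mm : Fin rr → ℕ) :
    (∏ j, (MvPolynomial.X ((tt j, c) : ℕ+ × WClsH d) : NsigmaH F d) ^ mm j) =
      MvPolynomial.monomial (vecOf c tt mm) 1 := by
  simp only [MvPolynomial.X_pow_eq_monomial]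
  exact prod_monomial_one _ _

lemma mkDer_vecOf (F : Type*) [CommRing F] (fn : ℕ+ × WClsH d → NsigmaH F d)
    (c : WClsH d) {rr : ℕ} (tt : Fin rr → ℕ+) (mm : Fin rr → ℕ) :
    MvPolynomial.mkDerivation F fn (MvPolynomial.monomial (vecOf c tt mm) (1 : F)) =
      ∑ j, MvPolynomial.monomial
          (vecOf c tt mm - Finsupp.single ((tt j, c) : ℕ+ × WClsH d) 1) ((mm j : F)) *
        fn (tt j, c) := by
  rw [MvPolynomial.mkDerivation_monomial, one_smul]
  have h0 : ∀ v : ℕ+ × WClsH d,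
      (MvPolynomial.monomial (vecOf c tt mm - Finsupp.single v 1) (((0 : ℕ) : F))) •
        fn v = 0 := by
    intro v
    rw [Nat.cast_zero, MvPolynomial.monomial_zero, zero_smul]
  have hadd : ∀ (v : ℕ+ × WClsH d) (b₁ b₂ : ℕ),
      (MvPolynomial.monomial (vecOf c tt mm - Finsupp.single v 1) (((b₁ + b₂ : ℕ) : F))) •
          fn v =
        (MvPolynomial.monomial (vecOf c tt mm - Finsupp.single v 1) ((b₁ : F))) • fn v +
        (MvPolynomial.monomial (vecOf c tt mm - Finsupp.single v 1) ((b₂ : F))) • fn v := by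
    intro v b₁ b₂
    rw [Nat.cast_add, map_add, add_smul]
  show (vecOf c tt mm).sum (fun v k =>
      (MvPolynomial.monomial (vecOf c tt mm - Finsupp.single v 1) ((k : F))) • fn v) = _
  unfold vecOf
  rw [← Finsupp.sum_finset_sum_index h0 hadd]
  refine Finset.sum_congr rfl fun j _ => ?_
  rw [Finsupp.sum_single_index (h0 _)]
  rw [smul_eq_mul]

end L35

/-- **Lemma 3.5.** Let `q ≥ 1` and let `a ∈ M̂(q-1)` be a primitive word containing some
letter `x_k` or `x_k^T` and such that no cyclic permutation of `a` equals `a^T`. Let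
`f_1, …, f_s` be pairwise distinct monomials `f_i = Π_j σ_{t_{ij}}(ā)^{m_{ij}}` with
`t_{i1} > ⋯ > t_{i r_i} ≥ 1` and each `m_{ij} > 0` not divisible by `p = char F`.
Then `∂_q(f_1), …, ∂_q(f_s)` are linearly independent over `F`. -/
theorem DS_linearIndependent (F : Type*) [Field F] (d : ℕ) (hd : 1 ≤ d) (q : ℕ+)
    (a : List (HLetter d)) (ha : WPrimitive a)
    (hlev : ∀ l ∈ a, letterLevel l ≤ (q : ℕ) - 1)
    (hx : ∃ (k : Fin d) (b : Bool), ((Sum.inl k : HBase d), b) ∈ a)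
    (hnc : ¬ List.IsRotated a (wordT hTau a))
    (s : ℕ) (r : Fin s → ℕ) (hr : ∀ i, 0 < r i)
    (t : (i : Fin s) → Fin (r i) → ℕ+) (ht : ∀ i, StrictAnti (t i))
    (m : (i : Fin s) → Fin (r i) → ℕ) (hm : ∀ i j, 0 < m i j)
    (hmp : ∀ i j, ¬ (ringChar F ∣ m i j))
    (f : Fin s → NsigmaH F d)
    (hf : ∀ i, f i =
      ∏ j, MvPolynomial.X ((t i j, Quot.mk _ (⟨a, ha⟩ : PrimWordH d)) : ℕ+ × WClsH d)
        ^ (m i j))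
    (hdist : Function.Injective f) :
    LinearIndependent F (fun i : Fin s => DS F d q (f i)) := by
  classical
  have hq1 : 1 ≤ (q : ℕ) := q.one_le
  have hlevq : ∀ l ∈ a, letterLevel l < (q : ℕ) := fun l hl => by
    have := hlev l hl; omega
  set c : WClsH d := Quot.mk _ (⟨a, ha⟩ : PrimWordH d) with hc
  set A : List (HLetter d) := (Quot.out c).1 with hA
  have hmkA : Quot.mk _ (Quot.out c) = c := Quot.out_eq c
  have hsimAa : simRel hTau A a := by
    refine L35.simRel_of_cls_eq (p := Quot.out c) (p' := ⟨a, ha⟩) ?_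
    rw [hmkA, hc]
  have hAprim : WPrimitive A := (Quot.out c).2
  have hlevA : ∀ l ∈ A, letterLevel l < (q : ℕ) := by
    rcases hsimAa with h | h
    · exact fun l hl => hlevq l (h.perm.subset hl)
    · intro l hl
      have h2 : l ∈ wordT hTau a := h.perm.subset hl
      rw [L35.mem_wordT] at h2
      have h3 := hlevq _ h2
      rwa [L35.letterLevel_hTau] at h3
  have hxA : ∃ (k : Fin d) (b : Bool), ((Sum.inl k : HBase d), b) ∈ A := by
    obtain ⟨k, b, hm0⟩ := hx
    rcases hsimAa with h | h
    · exact ⟨k, b, h.perm.symm.subset hm0⟩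
    · refine ⟨k, !b, h.perm.symm.subset ?_⟩
      rw [L35.mem_wordT]
      simpa [hTau] using hm0
  have hncA : ¬ A ~r wordT hTau A := fun hcon =>
    hnc (L35.isRotated_wordT_self_of_simRel (L35.simRel_symm hsimAa) hcon)
  have hn0 : 0 < A.length := List.length_pos_iff.mpr hAprim.1
  have hccQ : L35.clsCountQ q c = 0 := by
    rw [hc]; exact L35.countQ_eq_zero hlevq
  obtain ⟨w0, hw0⟩ := L35.derivWords_exists (q := q) hxA
  have hDWnodup : (derivWords q A).Nodup := L35.derivWords_nodup hlevA
  have primP : ∀ (ℓ : ℕ) (w : List (HLetter d)), w ∈ derivWords q A →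
      WPrimitive (wpow A ℓ ++ w) := fun ℓ w hw => L35.prim_pow_append hlevA hw ℓ
  have hclscQ : ∀ (ℓ : ℕ) (w : List (HLetter d)) (_ : w ∈ derivWords q A),
      L35.clsCountQ q (L35.clsF q ⟨a, ha⟩ A ℓ w) = 1 := by
    intro ℓ w hw
    erw [L35.clsF_mk (primP ℓ w hw), L35.clsCountQ_mk]
    exact L35.countQ_pow_append hlevA hw ℓ
  have hclsne : ∀ (ℓ : ℕ) (w : List (HLetter d)) (_ : w ∈ derivWords q A),
      L35.clsF q ⟨a, ha⟩ A ℓ w ≠ c := by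
    intro ℓ w hw hcc
    have h2 := hclscQ ℓ w hw
    rw [hcc, hccQ] at h2
    exact absurd h2 (by norm_num)
  have hclslen : ∀ (ℓ : ℕ) (w : List (HLetter d)) (_ : w ∈ derivWords q A),
      L35.clsLen (L35.clsF q ⟨a, ha⟩ A ℓ w) = ℓ * A.length + A.length := by
    intro ℓ w hw
    erw [L35.clsF_mk (primP ℓ w hw), L35.clsLen_mk]
    simp [L35.length_wpow, L35.length_derivWord hw]
  have hclsinj : ∀ (ℓ : ℕ) (w w' : List (HLetter d)) (_ : w ∈ derivWords q A)
      (_ : w' ∈ derivWords q A),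
      L35.clsF q ⟨a, ha⟩ A ℓ w = L35.clsF q ⟨a, ha⟩ A ℓ w' → w = w' := by
    intro ℓ w w' hw hw' hcc
    erw [L35.clsF_mk (primP ℓ w hw), L35.clsF_mk (primP ℓ w' hw')] at hcc
    exact L35.deriv_words_inj hAprim hlevA hncA hw hw' ℓ (L35.simRel_of_cls_eq hcc)
  have hfmon : ∀ i, f i = MvPolynomial.monomial (L35.vecOf c (t i) (m i)) (1 : F) := by
    intro i
    rw [hf i]
    exact L35.prod_X_pow_eq F c (t i) (m i)
  have hDS2 : ∀ i, DS F d q (f i) =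
      ∑ j : Fin (r i), ∑ ℓ ∈ Finset.range (t i j : ℕ),
        ((derivWords q A).map (fun w => MvPolynomial.monomial
          ((L35.vecOf c (t i) (m i) - Finsupp.single ((t i j, c) : ℕ+ × WClsH d) 1) +
            (Finsupp.single ((1 : ℕ+), L35.clsF q ⟨a, ha⟩ A ℓ w) 1 +
              L35.sgF c ((t i j : ℕ) - ℓ - 1)))
          ((m i j : F) * (-1 : F) ^ ℓ))).sum := by
    intro i
    rw [hfmon i]
    show MvPolynomial.mkDerivation F (dVal F q) _ = _
    rw [L35.mkDer_vecOf]
    refine Finset.sum_congr rfl fun j _ => ?_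
    rw [L35.dval_form F q (t i j) c ⟨a, ha⟩ primP]
    rw [Finset.mul_sum]
    refine Finset.sum_congr rfl fun ℓ _ => ?_
    rw [← List.sum_map_mul_left]
    refine congrArg List.sum (List.map_congr_left fun w hw => ?_)
    rw [MvPolynomial.monomial_mul]
  have hcoeff : ∀ (i : Fin s) (M : (ℕ+ × WClsH d) →₀ ℕ),
      MvPolynomial.coeff M (DS F d q (f i)) =
      ∑ j : Fin (r i), ∑ ℓ ∈ Finset.range (t i j : ℕ),
        ((derivWords q A).map (fun w =>
          if (L35.vecOf c (t i) (m i) - Finsupp.single ((t i j, c) : ℕ+ × WClsH d) 1) +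
            (Finsupp.single ((1 : ℕ+), L35.clsF q ⟨a, ha⟩ A ℓ w) 1 +
              L35.sgF c ((t i j : ℕ) - ℓ - 1)) = M
          then (m i j : F) * (-1 : F) ^ ℓ else 0)).sum := by
    intro i M
    rw [hDS2 i, MvPolynomial.coeff_sum]
    refine Finset.sum_congr rfl fun j _ => ?_
    rw [MvPolynomial.coeff_sum]
    refine Finset.sum_congr rfl fun ℓ _ => ?_
    rw [← MvPolynomial.lcoeff_apply, map_list_sum, List.map_map]
    refine congrArg List.sum (List.map_congr_left fun w hw => ?_)
    simp only [Function.comp_apply, MvPolynomial.lcoeff_apply]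
    rw [MvPolynomial.coeff_monomial]
  have hT : ∀ i : Fin s, 1 ≤ ((t i ⟨0, hr i⟩ : ℕ+) : ℕ) := fun i => (t i ⟨0, hr i⟩).one_le
  set Mi : Fin s → ((ℕ+ × WClsH d) →₀ ℕ) := fun i =>
    Finsupp.single ((1 : ℕ+),
        L35.clsF q ⟨a, ha⟩ A (((t i ⟨0, hr i⟩ : ℕ+) : ℕ) - 1) w0) 1 +
      (L35.vecOf c (t i) (m i) -
        Finsupp.single ((t i ⟨0, hr i⟩, c) : ℕ+ × WClsH d) 1)
    with hMi
  have hkey : ∀ (i i' : Fin s) (j : Fin (r i)) (ℓ : ℕ) (w : List (HLetter d)),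
      w ∈ derivWords q A → ℓ < (t i j : ℕ) →
      ((L35.vecOf c (t i) (m i) - Finsupp.single ((t i j, c) : ℕ+ × WClsH d) 1) +
        (Finsupp.single ((1 : ℕ+), L35.clsF q ⟨a, ha⟩ A ℓ w) 1 +
          L35.sgF c ((t i j : ℕ) - ℓ - 1)) = Mi i') →
      (i = i' ∧ j = ⟨0, hr i⟩ ∧ ℓ = ((t i' ⟨0, hr i'⟩ : ℕ+) : ℕ) - 1 ∧ w = w0) ∨
        ((t i' ⟨0, hr i'⟩ : ℕ+) : ℕ) < ((t i ⟨0, hr i⟩ : ℕ+) : ℕ) := by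
    intro i i' j ℓ w hwDW hℓ hE
    have hclw := hclsne ℓ w hwDW
    have happ := DFunLike.congr_fun hE ((1 : ℕ+), L35.clsF q ⟨a, ha⟩ A ℓ w)
    simp only [hMi, Finsupp.add_apply, Finsupp.tsub_apply] at happ
    have e1 : L35.vecOf c (t i) (m i) ((1 : ℕ+), L35.clsF q ⟨a, ha⟩ A ℓ w) = 0 :=
      L35.vecOf_apply_ne _ _ _ hclw
    have e2 : L35.vecOf c (t i') (m i') ((1 : ℕ+), L35.clsF q ⟨a, ha⟩ A ℓ w) = 0 :=
      L35.vecOf_apply_ne _ _ _ hclw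
    have e3 : (Finsupp.single ((t i j, c) : ℕ+ × WClsH d) 1)
        ((1 : ℕ+), L35.clsF q ⟨a, ha⟩ A ℓ w) = 0 := by
      rw [Finsupp.single_apply, if_neg (fun hcc => hclw (congrArg Prod.snd hcc).symm)]
    have e4 : (Finsupp.single ((t i' ⟨0, hr i'⟩, c) : ℕ+ × WClsH d) 1)
        ((1 : ℕ+), L35.clsF q ⟨a, ha⟩ A ℓ w) = 0 := by
      rw [Finsupp.single_apply, if_neg (fun hcc => hclw (congrArg Prod.snd hcc).symm)]
    have e5 : (Finsupp.single ((1 : ℕ+), L35.clsF q ⟨a, ha⟩ A ℓ w) 1)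
        ((1 : ℕ+), L35.clsF q ⟨a, ha⟩ A ℓ w) = 1 := by
      rw [Finsupp.single_apply, if_pos rfl]
    have e6 : L35.sgF c ((t i j : ℕ) - ℓ - 1)
        ((1 : ℕ+), L35.clsF q ⟨a, ha⟩ A ℓ w) = 0 := L35.sgF_apply_ne _ hclw
    rw [e1, e2, e3, e4, e5, e6] at happ
    have hcc : L35.clsF q ⟨a, ha⟩ A (((t i' ⟨0, hr i'⟩ : ℕ+) : ℕ) - 1) w0 =
        L35.clsF q ⟨a, ha⟩ A ℓ w := by
      by_contra hne
      rw [Finsupp.single_apply,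
        if_neg (fun hq2 => hne (congrArg Prod.snd hq2))] at happ
      simp at happ
    have hlen := congrArg L35.clsLen hcc
    rw [hclslen _ w0 hw0, hclslen ℓ w hwDW] at hlen
    have hℓeq : ℓ = ((t i' ⟨0, hr i'⟩ : ℕ+) : ℕ) - 1 := by
      have h9 : (((t i' ⟨0, hr i'⟩ : ℕ+) : ℕ) - 1) * A.length = ℓ * A.length := by omega
      have := Nat.eq_of_mul_eq_mul_right hn0 h9
      omega
    have hTile : ((t i' ⟨0, hr i'⟩ : ℕ+) : ℕ) ≤ (t i j : ℕ) := by
      have := hT i'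
      omega
    rcases lt_or_eq_of_le hTile with hlt | heq2
    · right
      have h2 : (⟨0, hr i⟩ : Fin (r i)) ≤ j := Fin.le_def.mpr (Nat.zero_le _)
      have h3 := (ht i).antitone h2
      have h4 : (t i j : ℕ) ≤ ((t i ⟨0, hr i⟩ : ℕ+) : ℕ) := by exact_mod_cast h3
      omega
    · left
      have hu0 : (t i j : ℕ) - ℓ - 1 = 0 := by omega
      rw [hu0, L35.sgF_zero, add_zero, ← hcc] at hE
      have hE2 : L35.vecOf c (t i) (m i) -
          Finsupp.single ((t i j, c) : ℕ+ × WClsH d) 1 =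
          L35.vecOf c (t i') (m i') -
          Finsupp.single ((t i' ⟨0, hr i'⟩, c) : ℕ+ × WClsH d) 1 := by
        ext v
        have h4 := DFunLike.congr_fun hE v
        simp only [hMi, Finsupp.add_apply] at h4
        omega
      have htik : t i j = t i' ⟨0, hr i'⟩ := PNat.coe_injective heq2.symm
      have hle1 : Finsupp.single ((t i j, c) : ℕ+ × WClsH d) 1 ≤
          L35.vecOf c (t i) (m i) :=
        Finsupp.single_le_iff.mpr (le_trans (hm i j) (L35.vecOf_ge c (t i) (m i) j))
      have hle2 : Finsupp.single ((t i' ⟨0, hr i'⟩, c) : ℕ+ × WClsH d) 1 ≤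
          L35.vecOf c (t i') (m i') :=
        Finsupp.single_le_iff.mpr (le_trans (hm i' _) (L35.vecOf_ge c (t i') (m i') _))
      have hveq : L35.vecOf c (t i) (m i) = L35.vecOf c (t i') (m i') := by
        have g1 := tsub_add_cancel_of_le hle1
        have g2 := tsub_add_cancel_of_le hle2
        rw [← g1, ← g2, hE2, htik]
      have hii : i = i' := hdist (by rw [hfmon i, hfmon i', hveq])
      subst hii
      refine ⟨rfl, (ht i).injective htik, hℓeq, ?_⟩
      rw [← hℓeq] at hcc
      exact (hclsinj ℓ w0 w hw0 hwDW hcc).symm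
  have hdiagE : ∀ i : Fin s,
      ((L35.vecOf c (t i) (m i) -
          Finsupp.single ((t i ⟨0, hr i⟩, c) : ℕ+ × WClsH d) 1) +
        (Finsupp.single ((1 : ℕ+),
            L35.clsF q ⟨a, ha⟩ A (((t i ⟨0, hr i⟩ : ℕ+) : ℕ) - 1) w0) 1 +
          L35.sgF c ((t i ⟨0, hr i⟩ : ℕ) - (((t i ⟨0, hr i⟩ : ℕ+) : ℕ) - 1) - 1))) =
        Mi i := by
    intro i
    have hz : (t i ⟨0, hr i⟩ : ℕ) - (((t i ⟨0, hr i⟩ : ℕ+) : ℕ) - 1) - 1 = 0 := by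
      have := hT i
      omega
    rw [hz, L35.sgF_zero, add_zero]
    simp only [hMi]
    exact add_comm _ _
  have hdiag : ∀ i : Fin s, MvPolynomial.coeff (Mi i) (DS F d q (f i)) =
      (m i ⟨0, hr i⟩ : F) * (-1 : F) ^ (((t i ⟨0, hr i⟩ : ℕ+) : ℕ) - 1) := by
    intro i
    rw [hcoeff i (Mi i)]
    have hside1 : ∀ j ∈ (Finset.univ : Finset (Fin (r i))), j ≠ ⟨0, hr i⟩ →
        (∑ ℓ ∈ Finset.range (t i j : ℕ),
          ((derivWords q A).map (fun w =>
            if (L35.vecOf c (t i) (m i) -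
                Finsupp.single ((t i j, c) : ℕ+ × WClsH d) 1) +
              (Finsupp.single ((1 : ℕ+), L35.clsF q ⟨a, ha⟩ A ℓ w) 1 +
                L35.sgF c ((t i j : ℕ) - ℓ - 1)) = Mi i
            then (m i j : F) * (-1 : F) ^ ℓ else 0)).sum) = 0 := by
      intro j _ hjne
      refine Finset.sum_eq_zero fun ℓ hℓmem => ?_
      refine List.sum_eq_zero fun x hx => ?_
      rcases List.mem_map.mp hx with ⟨w, hwDW, rfl⟩
      rw [if_neg]
      intro hEE
      rcases hkey i i j ℓ w hwDW (Finset.mem_range.mp hℓmem) hEE with ⟨_, h2, _, _⟩ | hlt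
      · exact hjne h2
      · exact lt_irrefl _ hlt
    rw [Finset.sum_eq_single_of_mem (⟨0, hr i⟩ : Fin (r i)) (Finset.mem_univ _) hside1]
    have hside2 : ∀ ℓ ∈ Finset.range (t i ⟨0, hr i⟩ : ℕ),
        ℓ ≠ ((t i ⟨0, hr i⟩ : ℕ+) : ℕ) - 1 →
        ((derivWords q A).map (fun w =>
          if (L35.vecOf c (t i) (m i) -
              Finsupp.single ((t i ⟨0, hr i⟩, c) : ℕ+ × WClsH d) 1) +
            (Finsupp.single ((1 : ℕ+), L35.clsF q ⟨a, ha⟩ A ℓ w) 1 +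
              L35.sgF c ((t i ⟨0, hr i⟩ : ℕ) - ℓ - 1)) = Mi i
          then (m i ⟨0, hr i⟩ : F) * (-1 : F) ^ ℓ else 0)).sum = 0 := by
      intro ℓ hℓmem hℓne
      refine List.sum_eq_zero fun x hx => ?_
      rcases List.mem_map.mp hx with ⟨w, hwDW, rfl⟩
      rw [if_neg]
      intro hEE
      rcases hkey i i ⟨0, hr i⟩ ℓ w hwDW (Finset.mem_range.mp hℓmem) hEE with
        ⟨_, _, h3, _⟩ | hlt
      · exact hℓne h3
      · exact lt_irrefl _ hlt
    rw [Finset.sum_eq_single_of_mem (((t i ⟨0, hr i⟩ : ℕ+) : ℕ) - 1)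
      (Finset.mem_range.mpr (by have := hT i; omega)) hside2]
    have hmc : ∀ w ∈ derivWords q A,
        (if (L35.vecOf c (t i) (m i) -
            Finsupp.single ((t i ⟨0, hr i⟩, c) : ℕ+ × WClsH d) 1) +
          (Finsupp.single ((1 : ℕ+),
              L35.clsF q ⟨a, ha⟩ A (((t i ⟨0, hr i⟩ : ℕ+) : ℕ) - 1) w) 1 +
            L35.sgF c ((t i ⟨0, hr i⟩ : ℕ) - (((t i ⟨0, hr i⟩ : ℕ+) : ℕ) - 1) - 1)) =
            Mi i
        then (m i ⟨0, hr i⟩ : F) * (-1 : F) ^ (((t i ⟨0, hr i⟩ : ℕ+) : ℕ) - 1) else 0) =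
        (if w = w0
          then (m i ⟨0, hr i⟩ : F) * (-1 : F) ^ (((t i ⟨0, hr i⟩ : ℕ+) : ℕ) - 1)
          else 0) := by
      intro w hw
      by_cases hww : w = w0
      · subst hww
        rw [if_pos (hdiagE i), if_pos rfl]
      · rw [if_neg ?_, if_neg hww]
        intro hEE
        rcases hkey i i ⟨0, hr i⟩ (((t i ⟨0, hr i⟩ : ℕ+) : ℕ) - 1) w hw (by have := hT i; omega) hEE with
          ⟨_, _, _, h4⟩ | hlt
        · exact hww h4
        · exact lt_irrefl _ hlt
    rw [List.map_congr_left hmc, L35.list_sum_ite_eq,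
      @List.count_eq_one_of_mem _ instBEqOfDecidableEq _ _ _ hDWnodup hw0, one_nsmul]
  have hoff : ∀ (i i' : Fin s), i ≠ i' →
      ((t i ⟨0, hr i⟩ : ℕ+) : ℕ) ≤ ((t i' ⟨0, hr i'⟩ : ℕ+) : ℕ) →
      MvPolynomial.coeff (Mi i') (DS F d q (f i)) = 0 := by
    intro i i' hne hle
    rw [hcoeff i (Mi i')]
    refine Finset.sum_eq_zero fun j _ => ?_
    refine Finset.sum_eq_zero fun ℓ hℓmem => ?_
    refine List.sum_eq_zero fun x hx => ?_
    rcases List.mem_map.mp hx with ⟨w, hwDW, rfl⟩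
    rw [if_neg]
    intro hEE
    rcases hkey i i' j ℓ w hwDW (Finset.mem_range.mp hℓmem) hEE with ⟨h1, _, _, _⟩ | hlt
    · exact hne h1
    · have h2 : (⟨0, hr i⟩ : Fin (r i)) ≤ j := Fin.le_def.mpr (Nat.zero_le _)
      have h3 := (ht i).antitone h2
      have h4 : (t i j : ℕ) ≤ ((t i ⟨0, hr i⟩ : ℕ+) : ℕ) := by exact_mod_cast h3
      omega
  rw [Fintype.linearIndependent_iff]
  intro g hg
  by_contra hcon
  push_neg at hcon
  obtain ⟨i0, hi0⟩ := hcon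
  set S : Finset (Fin s) := Finset.univ.filter (fun i => g i ≠ 0) with hS
  have hSne : S.Nonempty := ⟨i0, by simp [hS, hi0]⟩
  obtain ⟨imax, himaxS, hmax⟩ :=
    Finset.exists_max_image S (fun i => ((t i ⟨0, hr i⟩ : ℕ+) : ℕ)) hSne
  have hgmax : g imax ≠ 0 := by
    have := himaxS
    rw [hS, Finset.mem_filter] at this
    exact this.2
  have hzero : MvPolynomial.coeff (Mi imax) (∑ i, g i • DS F d q (f i)) = 0 := by
    rw [hg]
    exact MvPolynomial.coeff_zero _
  rw [MvPolynomial.coeff_sum] at hzero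
  have hsum : ∑ i, g i * MvPolynomial.coeff (Mi imax) (DS F d q (f i)) = 0 := by
    rw [← hzero]
    refine (Finset.sum_congr rfl fun i _ => ?_).symm
    rw [MvPolynomial.coeff_smul, smul_eq_mul]
  have hterm : ∀ i ∈ (Finset.univ : Finset (Fin s)), i ≠ imax →
      g i * MvPolynomial.coeff (Mi imax) (DS F d q (f i)) = 0 := by
    intro i _ hne
    by_cases hgi : g i = 0
    · rw [hgi, zero_mul]
    · have hiS : i ∈ S := by rw [hS, Finset.mem_filter]; exact ⟨Finset.mem_univ _, hgi⟩
      have hle := hmax i hiS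
      rw [hoff i imax hne hle, mul_zero]
  rw [Finset.sum_eq_single_of_mem imax (Finset.mem_univ _) hterm, hdiag imax] at hsum
  have hm0 : ((m imax ⟨0, hr imax⟩ : ℕ) : F) ≠ 0 := by
    intro hz
    exact hmp imax ⟨0, hr imax⟩ ((ringChar.spec F _).mp hz)
  rcases mul_eq_zero.mp hsum with h | h
  · exact hgmax h
  · rcases mul_eq_zero.mp h with h2 | h2
    · exact hm0 h2
    · exact (pow_ne_zero _ (neg_ne_zero.mpr (one_ne_zero : (1 : F) ≠ 0))) h2
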